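/- arXiv:1512.04922 — 5 statements merged into one kernel-verified Lean document; each statement's English description precedes it below -/
import Mathlib

section
/- Let (T(α), δ(α)) for α ∈ [0,1] be a nested family of sequential tests (T(α) a.s. nonincreasing in α, δ(α) a.s. nondecreasing in α) each controlling Type I error at level α under the null measure P₀. Define p_n = inf{α : T(α) ≤ n and δ(α) = 1}. Then for any stopping time T with respect to the data filtration, P₀(p_T ≤ s) ≤ s for all s ∈ [0,1]; i.e., (p_n) is an always valid p-value process. -/
open MeasureTheory Filter Set

/-- The value of a p-value process at a (possibly infinite) stopping time,
with the convention `p_∞ = liminf_n p_n`. -/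
noncomputable def stoppedP {Ω : Type*} (p : ℕ → Ω → ℝ) (T : Ω → ℕ∞) (ω : Ω) : ℝ :=
  if T ω = ⊤ then Filter.liminf (fun n => p n ω) Filter.atTop
  else p (T ω).toNat ω

/-- the p-value process `p_n = inf {α : T(α) ≤ n, δ(α) = 1}` obtained
from a nested family of sequential tests, each controlling Type I error at its level,
is always valid: for any stopping time `S`, `P₀(p_S ≤ s) ≤ s` for all `s ∈ [0,1]`. -/
theorem always_valid_of_nested_sequential_tests
    {Ω : Type*} {m0 : MeasurableSpace Ω} (μ : Measure Ω) [IsProbabilityMeasure μ]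
    (ℱ : Filtration ℕ m0)
    (T : ℝ → Ω → ℕ∞) (δ : ℝ → Ω → Bool)
    -- each T(α) is a stopping time w.r.t. the data filtration
    (hT_stop : ∀ α ∈ Icc (0:ℝ) 1, ∀ n : ℕ, MeasurableSet[ℱ n] {ω | T α ω ≤ n})
    -- each test controls Type I error at its level
    (hTypeI : ∀ α ∈ Icc (0:ℝ) 1, μ {ω | δ α ω = true} ≤ ENNReal.ofReal α)
    -- nestedness: a.s., T(α) is nonincreasing and δ(α) nondecreasing in α
    (hnested : ∀ᵐ ω ∂μ, ∀ α ∈ Icc (0:ℝ) 1, ∀ β ∈ Icc (0:ℝ) 1, α ≤ β →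
      T β ω ≤ T α ω ∧ (δ α ω = true → δ β ω = true))
    -- the derived p-value process (infimum over the nested family; empty inf is 1)
    (p : ℕ → Ω → ℝ)
    (hp : ∀ n ω, p n ω =
      sInf ({1} ∪ {α | α ∈ Icc (0:ℝ) 1 ∧ T α ω ≤ (n : ℕ∞) ∧ δ α ω = true})) :
    ∀ S : Ω → ℕ∞, (∀ n : ℕ, MeasurableSet[ℱ n] {ω | S ω ≤ n}) →
      ∀ s ∈ Icc (0:ℝ) 1, μ {ω | stoppedP p S ω ≤ s} ≤ ENNReal.ofReal s := by
  intro S _hS s hs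
  obtain ⟨hs0, hs1⟩ := hs
  rcases eq_or_lt_of_le hs1 with h1 | hlt
  · rw [h1, ENNReal.ofReal_one]
    exact prob_le_one
  · apply ENNReal.le_of_forall_pos_le_add
    intro ε hε _
    have hεpos : (0:ℝ) < (ε:ℝ) := hε
    set β := min (s + (ε:ℝ)) 1 with hβdef
    have hβ0 : 0 ≤ β := le_min (by linarith) zero_le_one
    have hβ1 : β ≤ 1 := min_le_right _ _
    have hsβ : s < β := lt_min (by linarith) hlt
    set N : Set Ω := {ω | ¬ (∀ α ∈ Icc (0:ℝ) 1, ∀ γ ∈ Icc (0:ℝ) 1, α ≤ γ →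
      T γ ω ≤ T α ω ∧ (δ α ω = true → δ γ ω = true))} with hNdef
    have hNnull : μ N = 0 := ae_iff.mp hnested
    have hsub : {ω | stoppedP p S ω ≤ s} ⊆ {ω | δ β ω = true} ∪ N := by
      intro ω hω
      by_cases hN : ∀ α ∈ Icc (0:ℝ) 1, ∀ γ ∈ Icc (0:ℝ) 1, α ≤ γ →
          T γ ω ≤ T α ω ∧ (δ α ω = true → δ γ ω = true)
      · left
        have hbdd : ∀ n : ℕ, BddBelow ({1} ∪ {α | α ∈ Icc (0:ℝ) 1 ∧ T α ω ≤ (n : ℕ∞) ∧ δ α ω = true}) := by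
          intro n
          refine ⟨0, ?_⟩
          rintro x (hx | hx)
          · simp only [mem_singleton_iff] at hx; linarith [hx]
          · exact hx.1.1
        have hne : ∀ n : ℕ, ({1} ∪ {α | α ∈ Icc (0:ℝ) 1 ∧ T α ω ≤ (n : ℕ∞) ∧ δ α ω = true} : Set ℝ).Nonempty :=
          fun n => ⟨1, Or.inl rfl⟩
        have hple : ∀ n : ℕ, p n ω ≤ 1 := by
          intro n
          rw [hp n ω]
          exact csInf_le (hbdd n) (Or.inl rfl)
        have hexists : ∃ n : ℕ, p n ω < β := by
          by_cases hT : S ω = ⊤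
          · have hlim : Filter.liminf (fun n => p n ω) Filter.atTop ≤ s := by
              simpa [stoppedP, hT] using hω
            by_contra hc
            push_neg at hc
            have hco : Filter.IsCoboundedUnder (· ≥ ·) Filter.atTop (fun n => p n ω) :=
              (Filter.isBoundedUnder_of ⟨1, fun n => hple n⟩).isCoboundedUnder_ge
            have : β ≤ Filter.liminf (fun n => p n ω) Filter.atTop :=
              Filter.le_liminf_of_le hco (Filter.Eventually.of_forall hc)
            linarith
          · refine ⟨(S ω).toNat, ?_⟩
            have : p (S ω).toNat ω ≤ s := by simpa [stoppedP, hT] using hω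
            linarith
        obtain ⟨n, hn⟩ := hexists
        rw [hp n ω] at hn
        obtain ⟨α, hαmem, hαβ⟩ := (csInf_lt_iff (hbdd n) (hne n)).mp hn
        rcases hαmem with h1' | ⟨hαI, _hTα, hδα⟩
        · simp only [mem_singleton_iff] at h1'
          exact absurd (h1' ▸ hαβ) (not_lt.mpr hβ1)
        · exact (hN α hαI β ⟨hβ0, hβ1⟩ hαβ.le).2 hδα
      · right; exact hN
    calc μ {ω | stoppedP p S ω ≤ s}
        ≤ μ ({ω | δ β ω = true} ∪ N) := measure_mono hsub
      _ ≤ μ {ω | δ β ω = true} + μ N := measure_union_le _ _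
      _ = μ {ω | δ β ω = true} := by rw [hNnull, add_zero]
      _ ≤ ENNReal.ofReal β := hTypeI β ⟨hβ0, hβ1⟩
      _ ≤ ENNReal.ofReal (s + (ε:ℝ)) := ENNReal.ofReal_le_ofReal (min_le_left _ _)
      _ = ENNReal.ofReal s + ENNReal.ofReal (ε:ℝ) := ENNReal.ofReal_add hs0 ε.coe_nonneg
      _ = ENNReal.ofReal s + ε := by rw [ENNReal.ofReal_coe_nnreal]
end

section
/- For every m ≥ 1 and 0 ≤ α ≤ 1, the supremum over all super-uniform sub-probability densities f on [0,1] (i.e., nonnegative measurable f with F(x) = ∫₀^x f ≤ x for all x and F(1) ≤ 1) of the quantity Σ_{k=1}^m (1/k) ∫_{(k−1)α/m}^{kα/m} f(x) dx equals (α/m) Σ_{k=1}^m 1/k, attained at F(kα/m) = kα/m. -/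
open MeasureTheory Set

/-- Abel-summation style bound. -/
lemma abel_bound (c F : ℕ → ℝ) (d : ℝ)
    (hc : ∀ k, 1 ≤ k → c (k+1) ≤ c k) (hF0 : F 0 = 0) :
    ∀ n : ℕ, (∀ k ≤ n, F k ≤ k * d) →
      (∑ k ∈ Finset.Icc 1 n, c k * (F k - F (k-1))) + c n * (n * d - F n)
        ≤ d * ∑ k ∈ Finset.Icc 1 n, c k := by
  intro n
  induction n with
  | zero => intro _; simp [hF0]
  | succ n ih =>
    intro hF
    have hF' : ∀ k ≤ n, F k ≤ k * d := fun k hk => hF k (le_trans hk (Nat.le_succ n))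
    rw [Finset.sum_Icc_succ_top (by omega : 1 ≤ n+1), Finset.sum_Icc_succ_top (by omega : 1 ≤ n+1)]
    have key : c (n+1) * ((n:ℝ) * d - F n) ≤ c n * ((n:ℝ) * d - F n) := by
      rcases Nat.eq_zero_or_pos n with h0 | h1
      · subst h0; simp [hF0]
      · exact mul_le_mul_of_nonneg_right (hc n h1)
          (by linarith [hF n (Nat.le_succ n)])
    have := ih hF'
    push_cast
    nlinarith [this, key]

/-- over all super-uniform sub-probability densities `f` on `[0,1]`
(nonnegative with `F(x) = ∫₀^x f ≤ x` and `F(1) ≤ 1`), the supremum of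
`Σ_{k=1}^m (1/k) ∫_{(k−1)α/m}^{kα/m} f` equals `(α/m) Σ_{k=1}^m 1/k`, and it is attained
(at any `f` with `F(kα/m) = kα/m` for all `k`, e.g. `f = 1` on `[0,1]`). -/
theorem superuniform_density_sup
    (m : ℕ) (hm : 1 ≤ m) (α : ℝ) (hα : α ∈ Icc (0:ℝ) 1) :
    IsGreatest
      {S : ℝ | ∃ f : ℝ → ℝ, Measurable f ∧ (∀ x, 0 ≤ f x) ∧
        IntegrableOn f (Icc (0:ℝ) 1) ∧
        (∀ x ∈ Icc (0:ℝ) 1, (∫ t in Ioc (0:ℝ) x, f t) ≤ x) ∧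
        (∫ t in Ioc (0:ℝ) 1, f t) ≤ 1 ∧
        S = ∑ k ∈ Finset.Icc 1 m,
          (1 / (k:ℝ)) * ∫ x in Ioc (((k:ℝ) - 1) * α / m) ((k:ℝ) * α / m), f x}
      ((α / m) * ∑ k ∈ Finset.Icc 1 m, (1 / (k:ℝ))) := by
  obtain ⟨hα0, hα1⟩ := hα
  have hm0 : (0:ℝ) < m := by exact_mod_cast hm
  constructor
  · -- membership: f = 1
    refine ⟨fun _ => 1, measurable_const, fun _ => zero_le_one, ?_, ?_, ?_, ?_⟩
    · exact (integrableOn_const_iff (by simp)).mpr (Or.inr (by simp [Real.volume_Icc]))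
    · intro x hx
      rw [setIntegral_const, measureReal_def, Real.volume_Ioc, smul_eq_mul, mul_one,
        ENNReal.toReal_ofReal (by linarith [hx.1])]
      simp
    · rw [setIntegral_const, measureReal_def, Real.volume_Ioc, smul_eq_mul, mul_one,
        ENNReal.toReal_ofReal (by norm_num)]
      norm_num
    · rw [Finset.mul_sum]
      refine Finset.sum_congr rfl fun k hk => ?_
      have hk1 : 1 ≤ k := (Finset.mem_Icc.mp hk).1
      have hab : ((k:ℝ) - 1) * α / m ≤ (k:ℝ) * α / m := by
        gcongr
        nlinarith
      rw [setIntegral_const, measureReal_def, Real.volume_Ioc, smul_eq_mul, mul_one,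
        ENNReal.toReal_ofReal (by linarith)]
      have hk0 : (0:ℝ) < k := by exact_mod_cast hk1
      field_simp
      ring
  · -- upper bound
    rintro S ⟨f, hfm, hf0, hfi, hfle, hf1, rfl⟩
    set F : ℕ → ℝ := fun k => ∫ t in Ioc (0:ℝ) ((k:ℝ) * α / m), f t with hFdef
    have hbnd : ∀ k ≤ m, (k:ℝ) * α / m ≤ 1 := by
      intro k hk
      rw [div_le_one hm0]
      calc (k:ℝ) * α ≤ (m:ℝ) * 1 := by
            apply mul_le_mul (by exact_mod_cast hk) hα1 hα0 (by positivity)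
        _ = m := by ring
    have hnn : ∀ k : ℕ, (0:ℝ) ≤ (k:ℝ) * α / m := by
      intro k; positivity
    have hsub : ∀ k ≤ m, Ioc (0:ℝ) ((k:ℝ)*α/m) ⊆ Icc 0 1 := by
      intro k hk
      exact (Set.Ioc_subset_Icc_self).trans (Set.Icc_subset_Icc le_rfl (hbnd k hk))
    have hFle : ∀ k ≤ m, F k ≤ (k:ℝ) * (α / m) := by
      intro k hk
      have := hfle ((k:ℝ)*α/m) ⟨hnn k, hbnd k hk⟩
      rw [hFdef]; simp only
      linarith [this, (by ring : (k:ℝ) * α / m = (k:ℝ) * (α/m))]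
    have hF0 : F 0 = 0 := by simp [hFdef]
    -- rewrite each summand
    have hterm : ∀ k ∈ Finset.Icc 1 m,
        (1 / (k:ℝ)) * ∫ x in Ioc (((k:ℝ) - 1) * α / m) ((k:ℝ) * α / m), f x
        = (1/(k:ℝ)) * (F k - F (k-1)) := by
      intro k hk
      obtain ⟨hk1, hkm⟩ := Finset.mem_Icc.mp hk
      congr 1
      have hcast : ((k:ℝ) - 1) = ((k-1 : ℕ) : ℝ) := by
        have : (1:ℕ) ≤ k := hk1
        push_cast [this]; ring
      set a : ℝ := ((k:ℝ) - 1) * α / m with ha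
      set b : ℝ := (k:ℝ) * α / m with hb
      have ha0 : 0 ≤ a := by
        rw [ha, hcast]; exact hnn (k-1)
      have hab : a ≤ b := by
        rw [ha, hb]
        gcongr
        nlinarith
      have hunion : Ioc (0:ℝ) a ∪ Ioc a b = Ioc 0 b := Set.Ioc_union_Ioc_eq_Ioc ha0 hab
      have hib : Ioc (0:ℝ) b ⊆ Icc 0 1 := hsub k hkm
      have hint1 : IntegrableOn f (Ioc (0:ℝ) a) :=
        hfi.mono_set ((Set.Ioc_subset_Ioc_right hab).trans hib)
      have hint2 : IntegrableOn f (Ioc a b) :=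
        hfi.mono_set ((Set.Ioc_subset_Ioc ha0 le_rfl).trans hib)
      have hFk : F k = (∫ t in Ioc (0:ℝ) a, f t) + ∫ t in Ioc a b, f t := by
        rw [hFdef]
        simp only
        rw [← hb, ← hunion, setIntegral_union (Set.Ioc_disjoint_Ioc_of_le le_rfl) measurableSet_Ioc hint1 hint2]
      have hFk1 : F (k-1) = ∫ t in Ioc (0:ℝ) a, f t := by
        rw [hFdef]; simp only
        congr 2
        rw [ha, hcast]
      rw [hFk, hFk1]; ring
    rw [Finset.sum_congr rfl hterm]
    -- apply abel lemma with c k = 1/k, d = α/m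
    have habel := abel_bound (fun k => 1/(k:ℝ)) F (α/m)
      (fun k hk => by
        apply one_div_le_one_div_of_le (by exact_mod_cast hk)
        push_cast; linarith)
      hF0 m hFle
    have hcm : (0:ℝ) ≤ 1/(m:ℝ) * ((m:ℝ) * (α/m) - F m) := by
      apply mul_nonneg (by positivity)
      linarith [hFle m le_rfl]
    calc (∑ k ∈ Finset.Icc 1 m, (1/(k:ℝ)) * (F k - F (k-1)))
        ≤ (∑ k ∈ Finset.Icc 1 m, (1/(k:ℝ)) * (F k - F (k-1))) + 1/(m:ℝ) * ((m:ℝ) * (α/m) - F m) := by linarith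
      _ ≤ (α/m) * ∑ k ∈ Finset.Icc 1 m, (1/(k:ℝ)) := habel
end

section
/- If X is a random variable that is super-uniform on [0,1] (P(X ≤ s) ≤ s for all s ∈ [0,1]), then for any m ≥ 1 and α ∈ [0,1], Σ_{k=1}^m (1/k) P((k−1)α/m < X ≤ kα/m) ≤ (α/m) Σ_{k=1}^m 1/k. -/
open MeasureTheory Set
open scoped ENNReal

/-- Abel summation helper. -/
lemma superuniform_abel_aux (a : ℕ → ℝ) (n : ℕ) :
    ∑ i ∈ Finset.range (n+1), (1/((i:ℝ)+1)) * (a (i+1) - a i)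
      = (1/((n:ℝ)+1)) * a (n+1) - a 0
        + ∑ i ∈ Finset.range n, ((1/((i:ℝ)+1)) - (1/((i:ℝ)+2))) * a (i+1) := by
  induction n with
  | zero => simp
  | succ n ih =>
    rw [Finset.sum_range_succ, ih, Finset.sum_range_succ]
    push_cast
    ring

/-- if `X` is super-uniform on `[0,1]` (`P(X ≤ s) ≤ s` for `s ∈ [0,1]`), then
`Σ_{k=1}^m (1/k) P((k−1)α/m < X ≤ kα/m) ≤ (α/m) Σ_{k=1}^m 1/k`. -/
theorem superuniform_bin_sum_bound
    {Ω : Type*} {m0 : MeasurableSpace Ω} (μ : Measure Ω) [IsProbabilityMeasure μ]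
    (X : Ω → ℝ) (hX : Measurable X)
    (hsuper : ∀ s ∈ Icc (0:ℝ) 1, μ {ω | X ω ≤ s} ≤ ENNReal.ofReal s)
    (m : ℕ) (hm : 1 ≤ m) (α : ℝ) (hα : α ∈ Icc (0:ℝ) 1) :
    ∑ k ∈ Finset.Icc 1 m,
        (1 / (k : ℝ≥0∞)) * μ {ω | ((k:ℝ) - 1) * α / m < X ω ∧ X ω ≤ (k:ℝ) * α / m}
      ≤ ENNReal.ofReal ((α / m) * ∑ k ∈ Finset.Icc 1 m, (1 / (k:ℝ))) := by
  obtain ⟨hα0, hα1⟩ := hα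
  have hmR : (0:ℝ) < m := by exact_mod_cast hm
  set F : ℝ → ℝ := fun s => (μ {ω | X ω ≤ s}).toReal with hFdef
  have hF0 : ∀ s, 0 ≤ F s := fun s => ENNReal.toReal_nonneg
  have hFle : ∀ s ∈ Icc (0:ℝ) 1, F s ≤ s := by
    intro s hs
    have h := hsuper s hs
    have := ENNReal.toReal_mono ENNReal.ofReal_ne_top h
    simpa [hFdef, ENNReal.toReal_ofReal hs.1] using this
  set a : ℕ → ℝ := fun i => F ((i:ℝ) * α / m) with hadef
  have hmeas : ∀ s : ℝ, MeasurableSet {ω | X ω ≤ s} := fun s =>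
    hX measurableSet_Iic
  -- bin measure as difference
  have hbin : ∀ k : ℕ, 1 ≤ k →
      (μ {ω | ((k:ℝ) - 1) * α / m < X ω ∧ X ω ≤ (k:ℝ) * α / m}).toReal
        = a k - a (k-1) := by
    intro k hk
    have hcast : ((k:ℝ) - 1) = ((k-1 : ℕ) : ℝ) := by
      have : (1:ℕ) ≤ k := hk
      push_cast [this]
      ring
    have hle : ((k:ℝ) - 1) * α / m ≤ (k:ℝ) * α / m := by
      gcongr ?_ / _
      nlinarith
    have hseteq : {ω | ((k:ℝ) - 1) * α / m < X ω ∧ X ω ≤ (k:ℝ) * α / m}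
        = {ω | X ω ≤ (k:ℝ) * α / m} \ {ω | X ω ≤ ((k:ℝ) - 1) * α / m} := by
      ext ω
      simp only [mem_setOf_eq, mem_diff, not_le]
      tauto
    have hsub : {ω | X ω ≤ ((k:ℝ) - 1) * α / m} ⊆ {ω | X ω ≤ (k:ℝ) * α / m} :=
      fun ω hω => le_trans hω hle
    rw [hseteq, measure_diff hsub (hmeas _).nullMeasurableSet (measure_ne_top μ _),
      ENNReal.toReal_sub_of_le (measure_mono hsub) (measure_ne_top μ _)]
    simp only [hadef, hcast, hFdef]
  have hbinnn : ∀ k : ℕ, 1 ≤ k → 0 ≤ a k - a (k-1) := by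
    intro k hk
    rw [← hbin k hk]; exact ENNReal.toReal_nonneg
  -- rewrite LHS as ofReal of a real sum
  have hterm : ∀ k ∈ Finset.Icc 1 m,
      (1 / (k : ℝ≥0∞)) * μ {ω | ((k:ℝ) - 1) * α / m < X ω ∧ X ω ≤ (k:ℝ) * α / m}
        = ENNReal.ofReal ((1/(k:ℝ)) * (a k - a (k-1))) := by
    intro k hk
    have hk1 : 1 ≤ k := (Finset.mem_Icc.mp hk).1
    have hkR : (0:ℝ) < k := by exact_mod_cast hk1
    rw [ENNReal.ofReal_mul (by positivity), ← hbin k hk1,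
      ENNReal.ofReal_toReal (measure_ne_top μ _)]
    congr 1
    rw [one_div, one_div, ENNReal.ofReal_inv_of_pos hkR, ENNReal.ofReal_natCast]
  rw [Finset.sum_congr rfl hterm, ← ENNReal.ofReal_sum_of_nonneg
    (fun k hk => by
      have hk1 : 1 ≤ k := (Finset.mem_Icc.mp hk).1
      have hkR : (0:ℝ) < k := by exact_mod_cast hk1
      exact mul_nonneg (by positivity) (hbinnn k hk1))]
  apply ENNReal.ofReal_le_ofReal
  -- now a real inequality
  obtain ⟨n, rfl⟩ : ∃ n, m = n + 1 := ⟨m - 1, (Nat.succ_pred_eq_of_pos hm).symm⟩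
  have hsum1 : ∑ k ∈ Finset.Icc 1 (n+1), (1/(k:ℝ)) * (a k - a (k-1))
      = ∑ i ∈ Finset.range (n+1), (1/((i:ℝ)+1)) * (a (i+1) - a i) := by
    rw [← Finset.Ico_add_one_right_eq_Icc, Finset.sum_Ico_eq_sum_range]
    apply Finset.sum_congr (by norm_num)
    intro i _
    have : 1 + i - 1 = i := by omega
    rw [this]
    push_cast
    ring_nf
  have hsum2 : ∑ k ∈ Finset.Icc 1 (n+1), (1/(k:ℝ))
      = ∑ i ∈ Finset.range n, (1/((i:ℝ)+2)) + 1 := by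
    rw [← Finset.Ico_add_one_right_eq_Icc, Finset.sum_Ico_eq_sum_range]
    have h1 : (n + 1 + 1 - 1) = n + 1 := by omega
    rw [h1, Finset.sum_range_succ']
    push_cast
    ring_nf
  rw [hsum1, hsum2, superuniform_abel_aux]
  have ha_le : ∀ i : ℕ, i ≤ n + 1 → a i ≤ (i:ℝ) * α / (n+1) := by
    intro i hi
    have hiR : (i:ℝ) ≤ (n:ℝ) + 1 := by exact_mod_cast hi
    have hs0 : 0 ≤ (i:ℝ) * α / (n+1) := by positivity
    have hs1 : (i:ℝ) * α / (n+1) ≤ 1 := by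
      rw [div_le_one (by positivity)]
      nlinarith [Nat.cast_nonneg (α := ℝ) i]
    have := hFle ((i:ℝ) * α / (n+1)) ⟨hs0, hs1⟩
    simpa [hadef] using this.trans_eq (by push_cast; ring)
  have hcast : ((n+1 : ℕ) : ℝ) = (n:ℝ) + 1 := by push_cast; ring
  calc (1/((n:ℝ)+1)) * a (n+1) - a 0
        + ∑ i ∈ Finset.range n, ((1/((i:ℝ)+1)) - (1/((i:ℝ)+2))) * a (i+1)
      ≤ (1/((n:ℝ)+1)) * (((n:ℝ)+1) * α / (n+1)) - 0
        + ∑ i ∈ Finset.range n,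
            ((1/((i:ℝ)+1)) - (1/((i:ℝ)+2))) * (((i:ℝ)+1) * α / (n+1)) := by
        gcongr (1/((n:ℝ)+1)) * ?_ - ?_ + ∑ i ∈ Finset.range n, ?_
        · have := ha_le (n+1) le_rfl
          simpa [hcast, hadef, hFdef] using this
        · exact hF0 _
        case h =>
          rename_i i hi
          have hc : 0 ≤ (1/((i:ℝ)+1)) - (1/((i:ℝ)+2)) := by
            have h1 : (0:ℝ) < (i:ℝ) + 1 := by positivity
            have h2 : (0:ℝ) < (i:ℝ) + 2 := by positivity
            rw [sub_nonneg, div_le_div_iff₀ h2 h1]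
            nlinarith
          have hb : a (i+1) ≤ ((i:ℝ)+1) * α / (n+1) := by
            have := ha_le (i+1) (by have := Finset.mem_range.mp hi; omega)
            simpa [Nat.cast_add, Nat.cast_one] using this
          exact mul_le_mul_of_nonneg_left hb hc
    _ = (α / (↑(n+1) : ℝ)) * (∑ i ∈ Finset.range n, (1/((i:ℝ)+2)) + 1) := by
        have hterm2 : ∀ i ∈ Finset.range n,
            ((1/((i:ℝ)+1)) - (1/((i:ℝ)+2))) * (((i:ℝ)+1) * α / (n+1))
              = (α/((n:ℝ)+1)) * (1/((i:ℝ)+2)) := by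
          intro i _
          have h1 : ((i:ℝ)+1) ≠ 0 := by positivity
          have h2 : ((i:ℝ)+2) ≠ 0 := by positivity
          have h3 : ((n:ℝ)+1) ≠ 0 := by positivity
          field_simp
          ring
        rw [Finset.sum_congr rfl hterm2, hcast, ← Finset.mul_sum]
        have h3 : ((n:ℝ)+1) ≠ 0 := by positivity
        field_simp
        ring
end

section
/- If for each i = 1, ..., m, (p_n^i) is an always valid p-value process and T is any stopping time, then applying the general-dependence Benjamini–Hochberg procedure (reject the j hypotheses with smallest p-values where j is maximal with p^{(j)}_T ≤ α j / (m Σ_{r=1}^m 1/r)) controls the false discovery rate at level α. -/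
open MeasureTheory Filter Set
open scoped Classical

set_option maxHeartbeats 1000000

/-- Rejection set of the general-dependence Benjamini–Hochberg procedure (BH-G) at level `α`:
reject the `j` hypotheses with smallest p-values where `j` is maximal with
`p^{(j)} ≤ α j / (m Σ_{r=1}^m 1/r)`; equivalently, reject `i` iff for some `j`, at least `j`
p-values lie below the `j`-th threshold and `pᵢ` does too. -/
noncomputable def bhgRejects (m : ℕ) (α : ℝ) (q : Fin m → ℝ) : Finset (Fin m) :=
  Finset.univ.filter (fun i => ∃ j ∈ Finset.Icc 1 m,
    j ≤ (Finset.univ.filter (fun i' =>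
        q i' ≤ α * j / (m * ∑ r ∈ Finset.Icc 1 m, (1 / (r:ℝ))))).card ∧
    q i ≤ α * j / (m * ∑ r ∈ Finset.Icc 1 m, (1 / (r:ℝ))))

lemma measurableSet_stop_top {Ω : Type*} {m0 : MeasurableSpace Ω} (ℱ : Filtration ℕ m0)
    (S : Ω → ℕ∞) (hS : ∀ n : ℕ, MeasurableSet[ℱ n] {ω | S ω ≤ n}) :
    MeasurableSet {ω | S ω = ⊤} := by
  have hSn : ∀ n : ℕ, MeasurableSet {ω | S ω ≤ (n : ℕ∞)} := fun n => ℱ.le n _ (hS n)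
  have : {ω | S ω = ⊤} = (⋃ n : ℕ, {ω | S ω ≤ (n : ℕ∞)})ᶜ := by
    ext ω
    simp only [mem_compl_iff, mem_iUnion, mem_setOf_eq, not_exists]
    constructor
    · intro h n hn
      rw [h] at hn
      simp at hn
    · intro h
      by_contra hne
      obtain ⟨n, hn⟩ := WithTop.ne_top_iff_exists.mp hne
      exact h n (le_of_eq hn.symm)
  rw [this]
  exact (MeasurableSet.iUnion hSn).compl

lemma measurable_stoppedP {Ω : Type*} {m0 : MeasurableSpace Ω} (ℱ : Filtration ℕ m0)
    (f : ℕ → Ω → ℝ) (hf : ∀ n, Measurable[ℱ n] (f n)) (S : Ω → ℕ∞)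
    (hS : ∀ n : ℕ, MeasurableSet[ℱ n] {ω | S ω ≤ n}) :
    Measurable (stoppedP f S) := by
  have hfn : ∀ n, Measurable (f n) := fun n => (hf n).mono (ℱ.le n) le_rfl
  have hSn : ∀ n : ℕ, MeasurableSet {ω | S ω ≤ (n : ℕ∞)} := fun n => ℱ.le n _ (hS n)
  have hTop : MeasurableSet {ω | S ω = ⊤} := measurableSet_stop_top ℱ S hS
  have ht : Measurable (fun ω => (S ω).toNat) := by
    apply measurable_to_countable'
    intro n
    rcases Nat.eq_zero_or_pos n with rfl | hn
    · have : (fun ω => (S ω).toNat) ⁻¹' {0} = {ω | S ω ≤ (0 : ℕ∞)} ∪ {ω | S ω = ⊤} := by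
        ext ω
        simp only [mem_preimage, mem_singleton_iff, mem_union, mem_setOf_eq]
        rcases eq_or_ne (S ω) ⊤ with h | h
        · simp [h]
        · lift S ω to ℕ using h with k hk
          simp [ENat.toNat_coe]
      rw [this]
      exact (hSn 0).union hTop
    · have : (fun ω => (S ω).toNat) ⁻¹' {n} = {ω | S ω ≤ (n : ℕ∞)} \ {ω | S ω ≤ ((n-1 : ℕ) : ℕ∞)} := by
        ext ω
        simp only [mem_preimage, mem_singleton_iff, mem_diff, mem_setOf_eq]
        rcases eq_or_ne (S ω) ⊤ with h | h
        · simp [h, ENat.toNat_top]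
          omega
        · lift S ω to ℕ using h with k hk
          simp only [ENat.toNat_coe, Nat.cast_le]
          omega
      rw [this]
      exact (hSn n).diff (hSn (n-1))
  have hD : Measurable (fun ω => f (S ω).toNat ω) := by
    have huncurry : Measurable (fun x : Ω × ℕ => f x.2 x.1) :=
      measurable_from_prod_countable_left (fun n => hfn n)
    exact huncurry.comp (measurable_id.prodMk ht)
  have hL : Measurable (fun ω => Filter.liminf (fun n => f n ω) Filter.atTop) :=
    Measurable.liminf hfn
  unfold stoppedP
  exact Measurable.ite hTop hL hD

lemma abel_aux (β : ℝ) (G : ℕ → ℝ) (hG0 : G 0 = 0) :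
    ∀ m : ℕ, 1 ≤ m → (∀ k, 1 ≤ k → k ≤ m → G k ≤ β * k) →
    ∑ k ∈ Finset.Icc 1 m, (1/(k:ℝ)) * (G k - G (k-1)) ≤
      β * (∑ k ∈ Finset.Icc 1 m, 1/(k:ℝ)) - β + G m / m := by
  intro m hm
  induction m, hm using Nat.le_induction with
  | base =>
    intro _
    simp [hG0]
  | succ n hn ih =>
    intro hG
    have hrec : ∀ k, 1 ≤ k → k ≤ n → G k ≤ β * k := fun k h1 h2 => hG k h1 (h2.trans (Nat.le_succ n))
    have ihn := ih hrec
    rw [Finset.sum_Icc_succ_top (by omega : 1 ≤ n + 1), Finset.sum_Icc_succ_top (by omega : 1 ≤ n + 1)]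
    have hGn : G n ≤ β * n := hG n hn (Nat.le_succ n)
    have hnpos : (1:ℝ) ≤ (n:ℝ) := by exact_mod_cast hn
    have h1 : (0:ℝ) < (n:ℝ) := by linarith
    have h2 : (0:ℝ) < ((n:ℝ) + 1) := by linarith
    have hsimp : ((n + 1 : ℕ) : ℝ) = (n:ℝ) + 1 := by push_cast; ring
    rw [hsimp]
    have key : G n / n - G n / ((n:ℝ)+1) ≤ β / ((n:ℝ)+1) := by
      rw [div_sub_div _ _ (ne_of_gt h1) (ne_of_gt h2)]
      rw [div_le_div_iff₀ (by positivity) h2]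
      ring_nf
      nlinarith
    have hstep : (n:ℕ) + 1 - 1 = n := rfl
    rw [hstep]
    have expand : (1/((n:ℝ)+1)) * (G (n+1) - G n)
        = G (n+1)/((n:ℝ)+1) - G n/((n:ℝ)+1) := by ring
    rw [mul_add]
    have hb : β * (1/((n:ℝ)+1)) = β / ((n:ℝ)+1) := by ring
    rw [hb]
    linarith [ihn]

/-- applying BH-G to always valid p-value processes evaluated at an arbitrary
stopping time controls the false discovery rate at level `α` (errors on `{T = ∞}` count as
zero); no independence across the `m` processes is assumed. -/
theorem bh_general_sequential_fdr
    {Ω : Type*} {m0 : MeasurableSpace Ω} (μ : Measure Ω) [IsProbabilityMeasure μ]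
    (ℱ : Filtration ℕ m0)
    (m : ℕ) (hm : 1 ≤ m)
    (p : Fin m → ℕ → Ω → ℝ)
    (hadapted : ∀ i n, Measurable[ℱ n] (p i n))
    (Null : Finset (Fin m))
    -- always validity of each truly null p-value process
    (hAV : ∀ i ∈ Null, ∀ S : Ω → ℕ∞, (∀ n : ℕ, MeasurableSet[ℱ n] {ω | S ω ≤ n}) →
      ∀ s ∈ Icc (0:ℝ) 1, μ {ω | stoppedP (p i) S ω ≤ s} ≤ ENNReal.ofReal s)
    (α : ℝ) (hα : α ∈ Ioo (0:ℝ) 1)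
    (S : Ω → ℕ∞) (hS : ∀ n : ℕ, MeasurableSet[ℱ n] {ω | S ω ≤ n}) :
    (∫ ω, (if S ω = ⊤ then (0:ℝ) else
        ((bhgRejects m α (fun i => stoppedP (p i) S ω) ∩ Null).card : ℝ) /
          max 1 ((bhgRejects m α (fun i => stoppedP (p i) S ω)).card : ℝ)) ∂μ) ≤ α := by
  obtain ⟨hα0, hα1⟩ := hα
  set c : ℝ := ∑ r ∈ Finset.Icc 1 m, (1 / (r:ℝ)) with hc
  have hc1 : (1:ℝ) ≤ c := by
    have h1m : 1 ∈ Finset.Icc 1 m := by simp [hm]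
    have h := Finset.single_le_sum (f := fun r : ℕ => 1/(r:ℝ))
      (fun r _ => by positivity) h1m
    rw [hc]
    exact le_trans (by norm_num) h
  have hmr : (0:ℝ) < m := by exact_mod_cast hm
  have hmc : (0:ℝ) < (m:ℝ) * c := by nlinarith
  set τ : ℕ → ℝ := fun j => α * j / ((m:ℝ) * c) with hτ
  have hτnn : ∀ k, 0 ≤ τ k := by
    intro k
    have : (0:ℝ) ≤ (k:ℝ) := Nat.cast_nonneg k
    positivity
  have hτmono : ∀ a b, a ≤ b → τ a ≤ τ b := by
    intro a b hab
    have hab' : (a:ℝ) ≤ (b:ℝ) := by exact_mod_cast hab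
    rw [hτ]
    dsimp only
    gcongr
  have hτle1 : ∀ k, k ≤ m → τ k ≤ 1 := by
    intro k hk
    have hkm : (k:ℝ) ≤ (m:ℝ) := by exact_mod_cast hk
    have : τ k ≤ α := by
      rw [div_le_iff₀ hmc]
      nlinarith [mul_le_mul_of_nonneg_left hkm hα0.le,
        mul_le_mul_of_nonneg_left hc1 (by positivity : (0:ℝ) ≤ α * (m:ℝ))]
    linarith
  set q : Fin m → Ω → ℝ := fun i ω => stoppedP (p i) S ω with hqdef
  have hq : ∀ i, Measurable (q i) := fun i => measurable_stoppedP ℱ (p i) (hadapted i) S hS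
  set R : Ω → Finset (Fin m) := fun ω => bhgRejects m α (fun i => q i ω) with hRdef
  have hRmem : ∀ (ω : Ω) (i : Fin m), i ∈ R ω ↔
      ∃ j, (1 ≤ j ∧ j ≤ m) ∧
        j ≤ (Finset.univ.filter (fun i' => q i' ω ≤ τ j)).card ∧ q i ω ≤ τ j := by
    intro ω i
    simp [hRdef, bhgRejects, Finset.mem_Icc, hτ, hc]
  -- the structural lemma
  have hRstruct : ∀ (ω : Ω) (i : Fin m), i ∈ R ω →
      ∃ k, 1 ≤ k ∧ k ≤ m ∧ k ≤ (R ω).card ∧ q i ω ≤ τ k ∧ (2 ≤ k → ¬ q i ω ≤ τ (k-1)) := by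
    intro ω i hi
    obtain ⟨j, ⟨hj1, hjm⟩, hjcard, hqi⟩ := (hRmem ω i).mp hi
    have hsub : (Finset.univ.filter (fun i' => q i' ω ≤ τ j)) ⊆ R ω := by
      intro i' hi'
      rw [Finset.mem_filter] at hi'
      exact (hRmem ω i').mpr ⟨j, ⟨hj1, hjm⟩, hjcard, hi'.2⟩
    have hcard : j ≤ (R ω).card := hjcard.trans (Finset.card_le_card hsub)
    have hex : ∃ k, 1 ≤ k ∧ q i ω ≤ τ k := ⟨j, hj1, hqi⟩
    classical
    set k := Nat.find hex with hkdef
    obtain ⟨hk1, hkq⟩ := Nat.find_spec hex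
    have hkj : k ≤ j := Nat.find_min' hex ⟨hj1, hqi⟩
    refine ⟨k, hk1, hkj.trans hjm, hkj.trans hcard, hkq, ?_⟩
    intro hk2 hcon
    have := Nat.find_min hex (m := k - 1) (by omega)
    exact this ⟨by omega, hcon⟩
  -- events
  set E : Fin m → ℕ → Set Ω := fun i k => {ω | q i ω ≤ τ k} with hE
  have hEmeas : ∀ i k, MeasurableSet (E i k) := fun i k =>
    measurableSet_le (hq i) measurable_const
  set B : Fin m → ℕ → Set Ω := fun i k => if k = 1 then E i 1 else E i k \ E i (k-1) with hB
  have hBmeas : ∀ i k, MeasurableSet (B i k) := by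
    intro i k
    rw [hB]
    dsimp only
    split
    · exact hEmeas i 1
    · exact (hEmeas i k).diff (hEmeas i (k-1))
  set g : Ω → ℝ := fun ω => ∑ i ∈ Null, ∑ k ∈ Finset.Icc 1 m,
      (B i k).indicator (fun _ => 1/(k:ℝ)) ω with hg
  have hgnn : ∀ ω, 0 ≤ g ω := by
    intro ω
    apply Finset.sum_nonneg
    intro i _
    apply Finset.sum_nonneg
    intro k _
    apply Set.indicator_nonneg
    intro _ _
    positivity
  -- pointwise bound
  have hnum : ∀ ω, ((R ω ∩ Null).card : ℝ) = ∑ i ∈ Null, if i ∈ R ω then (1:ℝ) else 0 := by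
    intro ω
    rw [Finset.sum_ite_mem, Finset.sum_const, nsmul_eq_mul, mul_one, Finset.inter_comm]
  have hpt : ∀ ω, (if S ω = ⊤ then (0:ℝ) else
      ((R ω ∩ Null).card : ℝ) / max 1 ((R ω).card : ℝ)) ≤ g ω := by
    intro ω
    split
    · exact hgnn ω
    · rw [hnum ω, Finset.sum_div]
      apply Finset.sum_le_sum
      intro i hiNull
      by_cases hiR : i ∈ R ω
      · obtain ⟨k, hk1, hkm, hkcard, hkq, hkmin⟩ := hRstruct ω i hiR
        have hcard1 : (1:ℝ) ≤ ((R ω).card : ℝ) := by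
          exact_mod_cast hk1.trans hkcard
        have hmax : max 1 ((R ω).card : ℝ) = ((R ω).card : ℝ) := max_eq_right hcard1
        rw [if_pos hiR, hmax]
        have hωB : ω ∈ B i k := by
          rw [hB]
          dsimp only
          by_cases hk : k = 1
          · rw [if_pos hk]
            subst hk
            exact hkq
          · rw [if_neg hk]
            exact ⟨hkq, hkmin (by omega)⟩
        have hterm : (B i k).indicator (fun _ => 1/(k:ℝ)) ω = 1/(k:ℝ) :=
          Set.indicator_of_mem hωB _
        have hle : (1:ℝ) / ((R ω).card : ℝ) ≤ 1/(k:ℝ) := by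
          apply one_div_le_one_div_of_le
          · exact_mod_cast hk1
          · exact_mod_cast hkcard
        calc (1:ℝ) / ((R ω).card : ℝ) ≤ 1/(k:ℝ) := hle
          _ = (B i k).indicator (fun _ => 1/(k:ℝ)) ω := hterm.symm
          _ ≤ ∑ k' ∈ Finset.Icc 1 m, (B i k').indicator (fun _ => 1/(k':ℝ)) ω := by
              apply Finset.single_le_sum (f := fun k' => (B i k').indicator (fun _ => 1/(k':ℝ)) ω)
              · intro k' _
                apply Set.indicator_nonneg
                intro _ _
                positivity
              · simp [Finset.mem_Icc, hk1, hkm]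
      · rw [if_neg hiR]
        rw [zero_div]
        apply Finset.sum_nonneg
        intro k _
        apply Set.indicator_nonneg
        intro _ _
        positivity
  -- measurability of the integrand
  have hTop : MeasurableSet {ω | S ω = ⊤} := measurableSet_stop_top ℱ S hS
  have hcardf : ∀ j, Measurable (fun ω => ((Finset.univ.filter (fun i' => q i' ω ≤ τ j)).card : ℕ)) := by
    intro j
    have : (fun ω => (Finset.univ.filter (fun i' => q i' ω ≤ τ j)).card)
        = fun ω => ∑ i' : Fin m, if q i' ω ≤ τ j then 1 else 0 := by
      funext ω
      rw [Finset.card_filter]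
    rw [this]
    apply Finset.measurable_sum
    intro i' _
    exact Measurable.ite (measurableSet_le (hq i') measurable_const)
      measurable_const measurable_const
  have hmemMeas : ∀ i : Fin m, MeasurableSet {ω | i ∈ R ω} := by
    intro i
    have : {ω | i ∈ R ω} = ⋃ j ∈ Finset.Icc 1 m,
        ({ω | j ≤ (Finset.univ.filter (fun i' => q i' ω ≤ τ j)).card} ∩ E i j) := by
      ext ω
      simp only [mem_setOf_eq, mem_iUnion, Finset.mem_Icc, mem_inter_iff, hE]
      rw [hRmem ω i]
      constructor
      · rintro ⟨j, ⟨h1, h2⟩, h3, h4⟩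
        exact ⟨j, ⟨h1, h2⟩, h3, h4⟩
      · rintro ⟨j, ⟨h1, h2⟩, h3, h4⟩
        exact ⟨j, ⟨h1, h2⟩, h3, h4⟩
    rw [this]
    apply MeasurableSet.biUnion (Finset.Icc 1 m).countable_toSet
    intro j _
    exact ((hcardf j) measurableSet_Ici).inter (hEmeas i j)
  have hmeas_num : Measurable (fun ω => ((R ω ∩ Null).card : ℝ)) := by
    have : (fun ω => ((R ω ∩ Null).card : ℝ))
        = fun ω => ∑ i ∈ Null, if i ∈ R ω then (1:ℝ) else 0 := funext hnum
    rw [this]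
    apply Finset.measurable_sum
    intro i _
    exact Measurable.ite (hmemMeas i) measurable_const measurable_const
  have hden_eq : ∀ ω, (((R ω).card : ℕ) : ℝ) = ∑ i : Fin m, if i ∈ R ω then (1:ℝ) else 0 := by
    intro ω
    rw [Finset.sum_ite_mem, Finset.univ_inter, Finset.sum_const, nsmul_eq_mul, mul_one]
  have hmeas_den : Measurable (fun ω => (((R ω).card : ℕ) : ℝ)) := by
    have : (fun ω => (((R ω).card : ℕ) : ℝ))
        = fun ω => ∑ i : Fin m, if i ∈ R ω then (1:ℝ) else 0 := funext hden_eq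
    rw [this]
    apply Finset.measurable_sum
    intro i _
    exact Measurable.ite (hmemMeas i) measurable_const measurable_const
  have hmeas_h : Measurable (fun ω => (if S ω = ⊤ then (0:ℝ) else
      ((R ω ∩ Null).card : ℝ) / max 1 ((R ω).card : ℝ))) := by
    apply Measurable.ite hTop measurable_const
    exact hmeas_num.div (measurable_const.max hmeas_den)
  -- integrability
  have hint_each : ∀ (i : Fin m) (k : ℕ),
      Integrable ((B i k).indicator (fun _ => 1/(k:ℝ))) μ :=
    fun i k => (integrable_const _).indicator (hBmeas i k)
  have hint_g : Integrable g μ := by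
    apply integrable_finset_sum
    intro i _
    apply integrable_finset_sum
    intro k _
    exact hint_each i k
  have hhnn : ∀ ω, 0 ≤ (if S ω = ⊤ then (0:ℝ) else
      ((R ω ∩ Null).card : ℝ) / max 1 ((R ω).card : ℝ)) := by
    intro ω
    split
    · exact le_rfl
    · exact div_nonneg (Nat.cast_nonneg _) (le_trans zero_le_one (le_max_left _ _))
  have hint_h : Integrable (fun ω => (if S ω = ⊤ then (0:ℝ) else
      ((R ω ∩ Null).card : ℝ) / max 1 ((R ω).card : ℝ))) μ := by
    apply Integrable.mono' hint_g hmeas_h.aestronglyMeasurable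
    apply ae_of_all
    intro ω
    rw [Real.norm_eq_abs, abs_of_nonneg (hhnn ω)]
    exact hpt ω
  -- the integral bound
  have hIle : (∫ ω, (if S ω = ⊤ then (0:ℝ) else
      ((R ω ∩ Null).card : ℝ) / max 1 ((R ω).card : ℝ)) ∂μ) ≤ ∫ ω, g ω ∂μ :=
    integral_mono hint_h hint_g hpt
  have hIg : (∫ ω, g ω ∂μ) = ∑ i ∈ Null, ∑ k ∈ Finset.Icc 1 m,
      (μ (B i k)).toReal * (1/(k:ℝ)) := by
    rw [hg]
    rw [integral_finset_sum _ (fun i _ => integrable_finset_sum _ (fun k _ => hint_each i k))]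
    congr 1
    funext i
    rw [integral_finset_sum _ (fun k _ => hint_each i k)]
    congr 1
    funext k
    rw [integral_indicator_const _ (hBmeas i k)]
    simp [smul_eq_mul, mul_comm, measureReal_def]
  -- per-i bound
  set β : ℝ := α / ((m:ℝ) * c) with hβ
  have hβnn : 0 ≤ β := by positivity
  have hiBound : ∀ i ∈ Null, ∑ k ∈ Finset.Icc 1 m, (μ (B i k)).toReal * (1/(k:ℝ)) ≤ α / m := by
    intro i hiNull
    set G : ℕ → ℝ := fun k => if k = 0 then 0 else (μ (E i k)).toReal with hG
    have hG0 : G 0 = 0 := by simp [hG]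
    have hGle : ∀ k, 1 ≤ k → k ≤ m → G k ≤ β * k := by
      intro k hk1 hkm
      have hτk : τ k ∈ Icc (0:ℝ) 1 := ⟨hτnn k, hτle1 k hkm⟩
      have hav := hAV i hiNull S hS (τ k) hτk
      have hEset : E i k = {ω | stoppedP (p i) S ω ≤ τ k} := rfl
      rw [hG]
      simp only [if_neg (by omega : ¬ k = 0)]
      rw [hEset]
      have := ENNReal.toReal_le_of_le_ofReal (hτnn k) hav
      calc (μ {ω | stoppedP (p i) S ω ≤ τ k}).toReal ≤ τ k := this
        _ = β * k := by rw [hτ, hβ]; ring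
    have hμB : ∀ k, 1 ≤ k → (μ (B i k)).toReal = G k - G (k-1) := by
      intro k hk1
      by_cases hk : k = 1
      · subst hk
        simp [hB, hG]
      · have hk2 : 2 ≤ k := by omega
        have hsub : E i (k-1) ⊆ E i k := by
          intro ω hω
          exact le_trans hω (hτmono (k-1) k (by omega))
        have : B i k = E i k \ E i (k-1) := by rw [hB]; simp [hk]
        rw [this, measure_diff hsub (hEmeas i (k-1)).nullMeasurableSet (measure_ne_top μ _)]
        rw [ENNReal.toReal_sub_of_le (measure_mono hsub) (measure_ne_top μ _)]
        rw [hG]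
        simp only [if_neg (by omega : ¬ k = 0), if_neg (by omega : ¬ k - 1 = 0)]
    have heq : ∑ k ∈ Finset.Icc 1 m, (μ (B i k)).toReal * (1/(k:ℝ))
        = ∑ k ∈ Finset.Icc 1 m, (1/(k:ℝ)) * (G k - G (k-1)) := by
      apply Finset.sum_congr rfl
      intro k hk
      rw [Finset.mem_Icc] at hk
      rw [hμB k hk.1, mul_comm]
    rw [heq]
    have habel := abel_aux β G hG0 m hm hGle
    have hGm : G m / m ≤ β := by
      rw [div_le_iff₀ hmr]
      exact hGle m hm le_rfl
    have hβc : β * c = α / m := by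
      rw [hβ]
      field_simp
    calc ∑ k ∈ Finset.Icc 1 m, (1/(k:ℝ)) * (G k - G (k-1))
        ≤ β * c - β + G m / m := habel
      _ ≤ β * c - β + β := by linarith
      _ = β * c := by ring
      _ = α / m := hβc
  -- put it together
  have hfinal : ∑ i ∈ Null, ∑ k ∈ Finset.Icc 1 m, (μ (B i k)).toReal * (1/(k:ℝ)) ≤ α := by
    calc ∑ i ∈ Null, ∑ k ∈ Finset.Icc 1 m, (μ (B i k)).toReal * (1/(k:ℝ))
        ≤ ∑ _i ∈ Null, α / m := Finset.sum_le_sum hiBound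
      _ = Null.card * (α / m) := by rw [Finset.sum_const, nsmul_eq_mul]
      _ ≤ m * (α / m) := by
          apply mul_le_mul_of_nonneg_right _ (by positivity)
          have : Null.card ≤ m := by
            have := Finset.card_le_univ Null
            simpa using this
          exact_mod_cast this
      _ = α := by field_simp
  calc (∫ ω, (if S ω = ⊤ then (0:ℝ) else
      ((R ω ∩ Null).card : ℝ) / max 1 ((R ω).card : ℝ)) ∂μ)
      ≤ ∫ ω, g ω ∂μ := hIle
    _ = ∑ i ∈ Null, ∑ k ∈ Finset.Icc 1 m, (μ (B i k)).toReal * (1/(k:ℝ)) := hIg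
    _ ≤ α := hfinal
end

section
/- There exist independent always valid p-value processes and a stopping time T for which applying BH-I to the stopped p-values inflates FDR above α. Specifically, with m = 2: let p_n¹ = U for all n with U ~ Uniform(0,1) (hypothesis 1 null), p₁² = 1 and p_n² = 0 for n ≥ 2 (hypothesis 2 non-null), and T = 1 if U ≤ α/2, else T = 2. Then the FDR of BH-I at level α applied to (p_T¹, p_T²) equals 3α/2. -/
open MeasureTheory Set
open scoped Classical

/-- Rejection set of the Benjamini–Hochberg procedure under independence (BH-I) at level `α`. -/
noncomputable def bhiRejects (m : ℕ) (α : ℝ) (q : Fin m → ℝ) : Finset (Fin m) :=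
  Finset.univ.filter (fun i => ∃ j ∈ Finset.Icc 1 m,
    j ≤ (Finset.univ.filter (fun i' => q i' ≤ α * j / m)).card ∧ q i ≤ α * j / m)

lemma one_le_card_filter_two (P : Fin 2 → Prop) [DecidablePred P] :
    1 ≤ (Finset.univ.filter P).card ↔ P 0 ∨ P 1 := by
  rw [Nat.one_le_iff_ne_zero, ← Nat.pos_iff_ne_zero, Finset.card_pos,
    Finset.filter_nonempty_iff]
  simp [Fin.exists_fin_two]

lemma two_le_card_filter_two (P : Fin 2 → Prop) [DecidablePred P] :
    2 ≤ (Finset.univ.filter P).card ↔ P 0 ∧ P 1 := by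
  constructor
  · intro h
    have hle := Finset.card_filter_le (Finset.univ : Finset (Fin 2)) P
    simp only [Finset.card_univ, Fintype.card_fin] at hle
    have h2 : (Finset.univ.filter P).card = (Finset.univ : Finset (Fin 2)).card := by
      simp only [Finset.card_univ, Fintype.card_fin]; omega
    have hall := Finset.card_filter_eq_iff.mp h2
    exact ⟨hall 0 (Finset.mem_univ _), hall 1 (Finset.mem_univ _)⟩
  · rintro ⟨h0, h1⟩
    have : Finset.univ.filter P = Finset.univ := by
      rw [Finset.filter_eq_self]
      intro x _
      fin_cases x <;> assumption
    rw [this]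
    simp
lemma mem_bhi2 (α : ℝ) (q : Fin 2 → ℝ) (i : Fin 2) :
    i ∈ bhiRejects 2 α q ↔
      (q i ≤ α / 2 ∧ (q 0 ≤ α / 2 ∨ q 1 ≤ α / 2)) ∨
      (q i ≤ α ∧ q 0 ≤ α ∧ q 1 ≤ α) := by
  have hc1 : (α * ((1:ℕ):ℝ) / ((2:ℕ):ℝ)) = α / 2 := by push_cast; ring
  have hc2 : (α * ((2:ℕ):ℝ) / ((2:ℕ):ℝ)) = α := by push_cast; ring
  simp only [bhiRejects, Finset.mem_filter, Finset.mem_univ, true_and]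
  constructor
  · rintro ⟨j, hj, hcard, hqi⟩
    rw [Finset.mem_Icc] at hj
    obtain ⟨hj1, hj2⟩ := hj
    interval_cases j
    · rw [hc1] at hcard hqi
      rw [one_le_card_filter_two] at hcard
      exact Or.inl ⟨hqi, hcard⟩
    · rw [hc2] at hcard hqi
      rw [two_le_card_filter_two] at hcard
      exact Or.inr ⟨hqi, hcard⟩
  · rintro (⟨hqi, hor⟩ | ⟨hqi, h0, h1⟩)
    · refine ⟨1, by simp, ?_, by rw [hc1]; exact hqi⟩
      rw [hc1, one_le_card_filter_two]; exact hor
    · refine ⟨2, by simp, ?_, by rw [hc2]; exact hqi⟩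
      rw [hc2, two_le_card_filter_two]; exact ⟨h0, h1⟩

lemma bhi_caseA (α : ℝ) (hα1 : α < 1) (q : Fin 2 → ℝ) (hq0 : q 0 ≤ α / 2)
    (hq1 : q 1 = 1) : bhiRejects 2 α q = {0} := by
  rw [Finset.ext_iff, Fin.forall_fin_two]
  simp only [mem_bhi2, Finset.mem_singleton]
  refine ⟨iff_of_true (Or.inl ⟨hq0, Or.inl hq0⟩) trivial,
    iff_of_false ?_ (by decide)⟩
  rintro (⟨h1, -⟩ | ⟨h1, -⟩) <;> rw [hq1] at h1 <;> linarith

lemma bhi_caseB (α : ℝ) (hα0 : 0 < α) (q : Fin 2 → ℝ) (hq0 : q 0 ≤ α)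
    (hq1 : q 1 = 0) : bhiRejects 2 α q = Finset.univ := by
  rw [Finset.ext_iff, Fin.forall_fin_two]
  simp only [mem_bhi2, Finset.mem_univ, iff_true]
  exact ⟨Or.inr ⟨hq0, hq0, by rw [hq1]; linarith⟩,
    Or.inl ⟨by rw [hq1]; linarith, Or.inr (by rw [hq1]; linarith)⟩⟩

lemma bhi_caseC (α : ℝ) (hα0 : 0 < α) (q : Fin 2 → ℝ) (hq0 : ¬ q 0 ≤ α)
    (hq1 : q 1 = 0) : bhiRejects 2 α q = {1} := by
  rw [Finset.ext_iff, Fin.forall_fin_two]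
  simp only [mem_bhi2, Finset.mem_singleton]
  refine ⟨iff_of_false ?_ (by decide),
    iff_of_true (Or.inl ⟨by rw [hq1]; linarith, Or.inr (by rw [hq1]; linarith)⟩) trivial⟩
  rintro (⟨h1, -⟩ | ⟨h1, -⟩) <;> [exact hq0 (by linarith); exact hq0 h1]

/-- counterexample: BH-I does not commute with always validity: with `m = 2`,
`p_n¹ ≡ U ~ Uniform(0,1)` (hypothesis 1 truly null), `p₁² = 1`, `p_n² = 0` for `n ≥ 2`
(hypothesis 2 non-null), and the stopping time `T = 1` if `U ≤ α/2`, else `T = 2`, the FDR of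
BH-I at level `α` applied to `(p_T¹, p_T²)` equals `3α/4 = (3/2)·(α·m₀/m)`, inflating the FDR
above the null-proportion-adjusted level `α·m₀/m = α/2` by a factor `3/2`. -/
theorem bhi_always_valid_counterexample
    {Ω : Type*} {m0 : MeasurableSpace Ω} (μ : Measure Ω) [IsProbabilityMeasure μ]
    (U : Ω → ℝ) (hUmeas : Measurable U)
    -- U is uniform on [0,1]
    (hU : ∀ s ∈ Icc (0:ℝ) 1, μ {ω | U ω ≤ s} = ENNReal.ofReal s)
    (α : ℝ) (hα : α ∈ Ioo (0:ℝ) 1)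
    -- the two p-value processes (indices: 0 ↔ hypothesis 1, null; 1 ↔ hypothesis 2)
    (p : Fin 2 → ℕ → Ω → ℝ)
    (hp1 : ∀ n ω, p 0 n ω = U ω)
    (hp2one : ∀ ω, p 1 1 ω = 1) (hp2 : ∀ n, 2 ≤ n → ∀ ω, p 1 n ω = 0)
    -- the stopping time
    (T : Ω → ℕ) (hT : ∀ ω, T ω = if U ω ≤ α / 2 then 1 else 2) :
    (∫ ω, ((bhiRejects 2 α (fun i => p i (T ω) ω) ∩ {0}).card : ℝ) /
        max 1 ((bhiRejects 2 α (fun i => p i (T ω) ω)).card : ℝ) ∂μ)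
      = 3 * α / 4 ∧
    (3 * α / 4 = (3 / 2) * (α * (1 / 2 : ℝ))) := by
  obtain ⟨hα0, hα1⟩ := hα
  set A : Set Ω := {ω | U ω ≤ α / 2} with hA_def
  set S : Set Ω := {ω | U ω ≤ α} with hS_def
  set B : Set Ω := S \ A with hB_def
  have hAmeas : MeasurableSet A := hUmeas measurableSet_Iic
  have hSmeas : MeasurableSet S := hUmeas measurableSet_Iic
  have hBmeas : MeasurableSet B := hSmeas.diff hAmeas
  have key : ∀ ω, ((bhiRejects 2 α (fun i => p i (T ω) ω) ∩ {0}).card : ℝ) /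
      max 1 ((bhiRejects 2 α (fun i => p i (T ω) ω)).card : ℝ)
      = A.indicator (fun _ => (1:ℝ)) ω + B.indicator (fun _ => (1/2:ℝ)) ω := by
    intro ω
    by_cases hA : U ω ≤ α / 2
    · have hT1 : T ω = 1 := by rw [hT ω, if_pos hA]
      have hq : bhiRejects 2 α (fun i => p i (T ω) ω) = {0} := by
        apply bhi_caseA α hα1
        · show p 0 (T ω) ω ≤ α / 2
          rw [hp1]; exact hA
        · show p 1 (T ω) ω = 1
          rw [hT1]; exact hp2one ω
      rw [hq, Set.indicator_of_mem (show ω ∈ A from hA), Set.indicator_of_notMem (fun hB => hB.2 hA)]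
      norm_num
    · have hT2 : T ω = 2 := by rw [hT ω, if_neg hA]
      have hq1 : p 1 (T ω) ω = 0 := by rw [hT2]; exact hp2 2 le_rfl ω
      by_cases hS : U ω ≤ α
      · have hq : bhiRejects 2 α (fun i => p i (T ω) ω) = Finset.univ := by
          apply bhi_caseB α hα0 _ _ hq1
          show p 0 (T ω) ω ≤ α
          rw [hp1]; exact hS
        rw [hq, Set.indicator_of_notMem (show ω ∉ A from hA), Set.indicator_of_mem (show ω ∈ B from ⟨hS, hA⟩)]
        norm_num [Finset.univ_inter]
      · have hq : bhiRejects 2 α (fun i => p i (T ω) ω) = {1} := by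
          apply bhi_caseC α hα0 _ _ hq1
          show ¬ p 0 (T ω) ω ≤ α
          rw [hp1]; exact hS
        rw [hq, Set.indicator_of_notMem (show ω ∉ A from hA),
          Set.indicator_of_notMem (fun hB => hS hB.1)]
        norm_num
  have hmuA : μ A = ENNReal.ofReal (α / 2) := hU (α / 2) ⟨by linarith, by linarith⟩
  have hmuS : μ S = ENNReal.ofReal α := hU α ⟨by linarith, by linarith⟩
  have hsub : A ⊆ S := by
    intro ω h
    show U ω ≤ α
    exact le_trans h (by linarith)
  have hmuB : μ B = ENNReal.ofReal (α - α / 2) := by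
    rw [hB_def, measure_diff hsub hAmeas.nullMeasurableSet (measure_ne_top μ A),
      hmuA, hmuS, ← ENNReal.ofReal_sub α (by linarith)]
  constructor
  · calc (∫ ω, ((bhiRejects 2 α (fun i => p i (T ω) ω) ∩ {0}).card : ℝ) /
        max 1 ((bhiRejects 2 α (fun i => p i (T ω) ω)).card : ℝ) ∂μ)
        = ∫ ω, (A.indicator (fun _ => (1:ℝ)) ω + B.indicator (fun _ => (1/2:ℝ)) ω) ∂μ := by
          exact integral_congr_ae (Filter.Eventually.of_forall key)
      _ = (∫ ω, A.indicator (fun _ => (1:ℝ)) ω ∂μ)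
            + ∫ ω, B.indicator (fun _ => (1/2:ℝ)) ω ∂μ :=
          integral_add ((integrable_const _).indicator hAmeas)
            ((integrable_const _).indicator hBmeas)
      _ = (μ A).toReal • (1:ℝ) + (μ B).toReal • (1/2:ℝ) := by
          rw [integral_indicator_const _ hAmeas, integral_indicator_const _ hBmeas]
          rfl
      _ = 3 * α / 4 := by
          rw [hmuA, hmuB, ENNReal.toReal_ofReal (by linarith),
            ENNReal.toReal_ofReal (by linarith)]
          simp only [smul_eq_mul]
          ring
  · ring
end
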